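/- arXiv:1904.10315 — 3 statements merged into one kernel-verified Lean document; each statement's English description precedes it below -/
import Mathlib

section
/- Let i = √(-1) and L(q) = (4iq + √(1-8q))/(1-4q) for 0 ≤ q < 1/8. Then 2(1 + iL)·q·dL/dq = (i + L)(L^2 - 1). -/
open Complex

/-- with `L q = (4 i q + √(1-8q))/(1-4q)` for real `0 ≤ q < 1/8`,
`2 (1 + i L) · q · dL/dq = (i + L)(L^2 - 1)`. -/
theorem stmt8 (L : ℝ → ℂ)
    (hL : ∀ q : ℝ, L q = (4 * I * q + (Real.sqrt (1 - 8 * q) : ℂ)) / (1 - 4 * q)) :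
    ∀ q : ℝ, 0 ≤ q → q < 1/8 →
      2 * (1 + I * L q) * ((q : ℂ) * deriv L q) = (I + L q) * ((L q) ^ 2 - 1) := by
  have hLf : L = fun q : ℝ => (4 * I * q + (Real.sqrt (1 - 8 * q) : ℂ)) / (1 - 4 * q) :=
    funext hL
  intro q hq0 hq
  set s : ℝ := Real.sqrt (1 - 8 * q) with hs_def
  have h8 : (0:ℝ) < 1 - 8 * q := by linarith
  have hs0 : 0 < s := Real.sqrt_pos.mpr h8
  have hsr : s ^ 2 = 1 - 8 * q := by
    rw [sq]; rw [hs_def, Real.mul_self_sqrt h8.le]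
  have hs2 : (s:ℂ) ^ 2 = 1 - 8 * (q:ℂ) := by
    rw [show ((s:ℂ)^2) = ((s^2 : ℝ) : ℂ) by push_cast; ring, hsr]; push_cast; ring
  have hsne : (s:ℂ) ≠ 0 := by exact_mod_cast ne_of_gt hs0
  have hD : (1:ℂ) - 4 * (q:ℂ) ≠ 0 := by
    have h := Complex.ofReal_ne_zero.mpr (show (1 - 4*q : ℝ) ≠ 0 from (by linarith : (0:ℝ) < 1 - 4*q).ne')
    push_cast at h
    convert h using 2
  -- derivative of sqrt part
  have hsqrt : HasDerivAt (fun x : ℝ => Real.sqrt (1 - 8 * x)) (-4 / s) q := by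
    have hinner : HasDerivAt (fun x : ℝ => 1 - 8 * x) (-8) q := by
      simpa using ((hasDerivAt_id q).const_mul 8).const_sub 1
    have := (Real.hasDerivAt_sqrt (ne_of_gt h8)).comp q hinner
    refine this.congr_deriv ?_
    rw [← hs_def]
    field_simp
    ring
  have hsqrtC : HasDerivAt (fun x : ℝ => ((Real.sqrt (1 - 8 * x) : ℝ) : ℂ)) ((-4 / s : ℝ) : ℂ) q :=
    hsqrt.ofReal_comp
  have hnum : HasDerivAt (fun x : ℝ => 4 * I * (x:ℂ) + ((Real.sqrt (1 - 8 * x) : ℝ) : ℂ))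
      (4 * I + ((-4 / s : ℝ) : ℂ)) q := by
    have h1 : HasDerivAt (fun x : ℝ => 4 * I * (x:ℂ)) (4 * I) q := by
      simpa using (Complex.ofRealCLM.hasDerivAt (x := q)).const_mul (4 * I)
    exact h1.add hsqrtC
  have hden : HasDerivAt (fun x : ℝ => (1:ℂ) - 4 * (x:ℂ)) (-4) q := by
    simpa using ((Complex.ofRealCLM.hasDerivAt (x := q)).const_mul 4).const_sub (1:ℂ)
  have hLd : HasDerivAt L
      (((4 * I + ((-4 / s : ℝ) : ℂ)) * (1 - 4 * (q:ℂ)) -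
        (4 * I * (q:ℂ) + (s:ℂ)) * (-4)) / (1 - 4 * (q:ℂ)) ^ 2) q := by
    rw [hLf]
    exact hnum.div hden hD
  have hLq : L q = (4 * I * (q:ℂ) + (s:ℂ)) / (1 - 4 * (q:ℂ)) := hL q
  clear_value s
  rw [hLq, hLd.deriv]
  have hc : ((-4 / s : ℝ) : ℂ) = -4 / (s:ℂ) := by push_cast; ring
  rw [hc]
  field_simp
  linear_combination (8*(q:ℂ)*((s:ℂ)*((s:ℂ)+I)) - 8*(q:ℂ)*(I*(s:ℂ)-4*(q:ℂ)) - 8*(q:ℂ)*((s:ℂ)^2-(1-8*(q:ℂ))) + 32*(q:ℂ)^2*(I^2+1) - ((s:ℂ)*((s:ℂ)+I))) * hs2 + (32*(q:ℂ)^2*(I*(s:ℂ)-4*(q:ℂ)) - 16*(q:ℂ)^2*((s:ℂ)*((s:ℂ)+I))) * Complex.I_sq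
end

section
/- Define formal power series over ℂ: I_1^E(q) = 3·∑_{d≥1} (3d-1)!/(d!)^3 q^d, B_1' = q·(d/dq) I_1^E, X = (q·(d/dq) B_1')/(1 + B_1'), and L(q) = (1-27q)^{-1/3}. Then X^2 - (L^3 - 1)X + q·(dX/dq) - (2/9)(L^3 - 1) = 0. -/
open PowerSeries

private lemma theta_coeff (g : ℂ⟦X⟧) (n : ℕ) :
    coeff (R := ℂ) n (PowerSeries.X * d⁄dX ℂ g) = n * coeff (R := ℂ) n g := by
  cases n with
  | zero =>
      simp [coeff_zero_eq_constantCoeff, map_mul, constantCoeff_X]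
  | succ m =>
      rw [coeff_succ_X_mul, coeff_derivative]
      push_cast
      ring

private lemma theta2_coeff (g : ℂ⟦X⟧) (n : ℕ) :
    coeff (R := ℂ) n (PowerSeries.X * d⁄dX ℂ (PowerSeries.X * d⁄dX ℂ g))
      = n * (n * coeff (R := ℂ) n g) := by
  rw [theta_coeff, theta_coeff]

/-- over `ℂ⟦q⟧`, with `I₁ᴱ = 3 ∑_{d≥1} (3d-1)!/(d!)³ qᵈ`,
`B₁' = q·d(I₁ᴱ)/dq`, `X = (q·d(B₁')/dq)/(1+B₁')`, and `L = (1-27q)^{-1/3}`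
(characterized by `L³(1-27q) = 1` with constant term `1`), one has
`X² - (L³-1)X + q·dX/dq - (2/9)(L³-1) = 0`. -/
theorem stmt12
    (I₁ : ℂ⟦X⟧)
    (hI₁ : I₁ = PowerSeries.mk fun d =>
      if d = 0 then 0 else 3 * ((3 * d - 1).factorial : ℂ) / ((d.factorial : ℂ)) ^ 3)
    (B₁' Xs L : ℂ⟦X⟧)
    (hB : B₁' = PowerSeries.X * d⁄dX ℂ I₁)
    (hX : Xs = (PowerSeries.X * d⁄dX ℂ B₁') * (1 + B₁')⁻¹)
    (hL : L ^ 3 * (1 - 27 * PowerSeries.X) = 1)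
    (hL0 : PowerSeries.constantCoeff (R := ℂ) L = 1) :
    Xs ^ 2 - (L ^ 3 - 1) * Xs + PowerSeries.X * d⁄dX ℂ Xs
      - (PowerSeries.C (R := ℂ) (2/9)) * (L ^ 3 - 1) = 0 := by
  set F : ℂ⟦X⟧ := 1 + B₁' with hF
  have hdF : d⁄dX ℂ F = d⁄dX ℂ B₁' := by
    rw [hF, map_add, Derivation.map_one_eq_zero, zero_add]
  have eN : ∀ m : ℕ, (3 * (m + 1)).factorial
      = (3 * m + 3) * ((3 * m + 2) * ((3 * m + 1) * (3 * m).factorial)) := by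
    intro m
    have e1 : 3 * (m + 1) = 3 * m + 2 + 1 := by omega
    rw [e1, Nat.factorial_succ, Nat.factorial_succ, Nat.factorial_succ]
  have eN2 : ∀ m : ℕ, (3 * m + 2).factorial
      = (3 * m + 2) * ((3 * m + 1) * (3 * m).factorial) := by
    intro m
    have e1 : 3 * m + 2 = 3 * m + 1 + 1 := by omega
    rw [e1, Nat.factorial_succ, Nat.factorial_succ]
  -- coefficients of F
  have hFcoeff : ∀ n, coeff (R := ℂ) n F = ((3 * n).factorial : ℂ) / ((n.factorial : ℂ)) ^ 3 := by
    intro n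
    have h0 : coeff (R := ℂ) n F = coeff (R := ℂ) n (1 : ℂ⟦X⟧) + (n : ℂ) * coeff (R := ℂ) n I₁ := by
      rw [hF, map_add, hB, theta_coeff]
    rw [h0, hI₁]
    cases n with
    | zero => simp
    | succ m =>
        have h3 : 3 * (m + 1) - 1 = 3 * m + 2 := by omega
        have hm : ((m.factorial : ℂ)) ≠ 0 := by
          exact_mod_cast Nat.factorial_ne_zero m
        have hm1 : ((m : ℂ) + 1) ≠ 0 := by
          exact_mod_cast Nat.cast_add_one_ne_zero (R := ℂ) m
        rw [coeff_mk, if_neg (Nat.succ_ne_zero m), coeff_one, if_neg (Nat.succ_ne_zero m),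
          h3, eN m, eN2 m, Nat.factorial_succ m]
        push_cast
        field_simp
        ring
  -- the hypergeometric ODE for F
  have hODE : (1 - 27 * PowerSeries.X) * (PowerSeries.X * d⁄dX ℂ (PowerSeries.X * d⁄dX ℂ F))
      = 27 * PowerSeries.X * (PowerSeries.X * d⁄dX ℂ F) + 6 * PowerSeries.X * F := by
    have key : (PowerSeries.X * d⁄dX ℂ (PowerSeries.X * d⁄dX ℂ F))
        = PowerSeries.C (R := ℂ) 27 *
            (PowerSeries.X * (PowerSeries.X * d⁄dX ℂ (PowerSeries.X * d⁄dX ℂ F)))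
        + PowerSeries.C (R := ℂ) 27 * (PowerSeries.X * (PowerSeries.X * d⁄dX ℂ F))
        + PowerSeries.C (R := ℂ) 6 * (PowerSeries.X * F) := by
      ext n
      rw [(coeff (R := ℂ) n).map_add, (coeff (R := ℂ) n).map_add, coeff_C_mul, coeff_C_mul, coeff_C_mul]
      cases n with
      | zero =>
          simp [coeff_zero_eq_constantCoeff, map_mul, constantCoeff_X]
      | succ m =>
          rw [theta2_coeff, coeff_succ_X_mul, coeff_succ_X_mul, coeff_succ_X_mul,
            theta2_coeff, theta_coeff, hFcoeff, hFcoeff]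
          have hm : ((m.factorial : ℂ)) ≠ 0 := by
            exact_mod_cast Nat.factorial_ne_zero m
          have hm1 : ((m : ℂ) + 1) ≠ 0 := by
            exact_mod_cast Nat.cast_add_one_ne_zero (R := ℂ) m
          rw [eN m, Nat.factorial_succ m]
          push_cast
          field_simp
          ring
    have h27 : (PowerSeries.C (R := ℂ) 27 : ℂ⟦X⟧) = 27 := map_ofNat (C (R := ℂ)) 27
    have h6 : (PowerSeries.C (R := ℂ) 6 : ℂ⟦X⟧) = 6 := map_ofNat (C (R := ℂ)) 6
    rw [h27, h6] at key
    linear_combination key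
  -- algebraic manipulation
  have hF0 : constantCoeff (R := ℂ) F = 1 := by
    simp [hF, hB, map_add, map_mul, constantCoeff_X]
  have hFinv : F * F⁻¹ = 1 :=
    PowerSeries.mul_inv_cancel F (by rw [hF0]; exact one_ne_zero)
  have h1 : Xs * F = PowerSeries.X * d⁄dX ℂ F := by
    rw [hX, hdF]
    calc PowerSeries.X * d⁄dX ℂ B₁' * (1 + B₁')⁻¹ * F
        = PowerSeries.X * d⁄dX ℂ B₁' * (F⁻¹ * F) := by rw [hF]; ring
      _ = PowerSeries.X * d⁄dX ℂ B₁' := by rw [mul_comm F⁻¹ F, hFinv, mul_one]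
  have h2 : (PowerSeries.X * d⁄dX ℂ Xs) * F
      = PowerSeries.X * d⁄dX ℂ (PowerSeries.X * d⁄dX ℂ F)
        - Xs * (PowerSeries.X * d⁄dX ℂ F) := by
    have hd : d⁄dX ℂ (Xs * F) = d⁄dX ℂ (PowerSeries.X * d⁄dX ℂ F) := by rw [h1]
    rw [Derivation.leibniz, smul_eq_mul, smul_eq_mul] at hd
    have h5 : PowerSeries.X * (Xs * d⁄dX ℂ F + F * d⁄dX ℂ Xs)
        = PowerSeries.X * d⁄dX ℂ (PowerSeries.X * d⁄dX ℂ F) := by rw [hd]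
    calc (PowerSeries.X * d⁄dX ℂ Xs) * F
        = PowerSeries.X * (Xs * d⁄dX ℂ F + F * d⁄dX ℂ Xs)
          - Xs * (PowerSeries.X * d⁄dX ℂ F) := by ring
      _ = _ := by rw [h5]
  have hc : (PowerSeries.C (R := ℂ) (2/9)) * 27 = (6 : ℂ⟦X⟧) := by
    rw [show (27 : ℂ⟦X⟧) = PowerSeries.C (R := ℂ) 27 from (map_ofNat (C (R := ℂ)) 27).symm,
      ← map_mul, show (6 : ℂ⟦X⟧) = PowerSeries.C (R := ℂ) 6 from (map_ofNat (C (R := ℂ)) 6).symm]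
    norm_num
  have hune : (1 - 27 * PowerSeries.X : ℂ⟦X⟧) ≠ 0 := by
    intro h
    have h' := congrArg (constantCoeff (R := ℂ)) h
    simp [map_sub, map_mul, constantCoeff_X] at h'
  have hFne : F ≠ 0 := by
    intro h
    rw [h, map_zero] at hF0
    exact zero_ne_one hF0
  have key2 : (Xs ^ 2 - (L ^ 3 - 1) * Xs + PowerSeries.X * d⁄dX ℂ Xs
      - (PowerSeries.C (R := ℂ) (2/9)) * (L ^ 3 - 1)) * (F * (1 - 27 * PowerSeries.X)) = 0 := by
    linear_combination (1 - 27 * PowerSeries.X) * h2 + hODE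
      + ((1 - 27 * PowerSeries.X) * Xs - 27 * PowerSeries.X) * h1
      + (-(Xs * F) - (PowerSeries.C (R := ℂ) (2/9)) * F) * hL
      + (-(PowerSeries.X * F)) * hc
  rcases mul_eq_zero.mp key2 with h | h
  · exact h
  · exact absurd h (mul_ne_zero hFne hune)
end

section
/- Define formal power series over ℂ: I_1^{K3}(q) = (4·∑_{d≥1} (4d)!/(d!)^4 (∑_{r=d+1}^{4d} 1/r) q^d) / (∑_{d≥0} (4d)!/(d!)^4 q^d), A_1' = q·(d/dq) I_1^{K3}, X = (q·(d/dq) A_1')/(1 + A_1'), and L(q) = (1-256q)^{-1/4}. Then X^2 - 2·q·(dX/dq) + (1/16)(12L^8 - 11L^4 - 1) = 0. -/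
open PowerSeries

noncomputable section
namespace Stmt13Aux


/-- `θ = q d/dq` -/
def th (f : ℂ⟦X⟧) : ℂ⟦X⟧ := PowerSeries.X * d⁄dX ℂ f

lemma th_add (f g : ℂ⟦X⟧) : th (f + g) = th f + th g := by
  simp [th, map_add, mul_add]

lemma th_sub (f g : ℂ⟦X⟧) : th (f - g) = th f - th g := by
  simp [th, map_sub, mul_sub]

lemma th_mul (f g : ℂ⟦X⟧) : th (f * g) = th f * g + f * th g := by
  simp only [th, Derivation.leibniz, smul_eq_mul]
  ring

lemma th_one : th (1 : ℂ⟦X⟧) = 0 := by simp [th]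

lemma th_X : th (PowerSeries.X : ℂ⟦X⟧) = PowerSeries.X := by
  simp [th]

lemma th_C (a : ℂ) : th (C (R := ℂ) a) = 0 := by simp [th]

lemma th_ofNat (n : ℕ) [n.AtLeastTwo] :
    th (no_index (OfNat.ofNat n) : ℂ⟦X⟧) = 0 := by
  rw [show (OfNat.ofNat n : ℂ⟦X⟧) = C (R := ℂ) (OfNat.ofNat n) from (map_ofNat _ _).symm]
  exact th_C _

lemma coeff_th (n : ℕ) (f : ℂ⟦X⟧) : coeff n (th f) = n * coeff n f := by
  cases n with
  | zero => simp [th]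
  | succ m =>
    rw [th, coeff_succ_X_mul, coeff_derivative]
    push_cast
    ring

lemma constantCoeff_th (f : ℂ⟦X⟧) : constantCoeff (R := ℂ) (th f) = 0 := by
  simp [th]

lemma th_eq_zero {f : ℂ⟦X⟧} (h1 : th f = 0) (h2 : constantCoeff (R := ℂ) f = 0) :
    f = 0 := by
  ext n
  cases n with
  | zero => simpa using h2
  | succ m =>
    have := congrArg (coeff (m + 1)) h1
    rw [coeff_th, map_zero] at this
    rcases mul_eq_zero.mp this with h | h
    · exact absurd h (by exact_mod_cast Nat.succ_ne_zero m)
    · simpa using h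

/-- the coefficients of the holomorphic period -/
def cc (d : ℕ) : ℂ := ((4 * d).factorial : ℂ) / ((d.factorial : ℂ)) ^ 4

lemma fact_ne (d : ℕ) : ((d.factorial : ℂ)) ≠ 0 := by
  exact_mod_cast d.factorial_ne_zero

lemma hc (n : ℕ) :
    ((n : ℂ) + 1) ^ 3 * cc (n + 1)
      = 4 * (4 * n + 1) * (4 * n + 2) * (4 * n + 3) * cc n := by
  have h4 : (4 * (n + 1)).factorial
      = (4 * n + 4) * ((4 * n + 3) * ((4 * n + 2) * ((4 * n + 1) * (4 * n).factorial))) := by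
    rw [show 4 * (n + 1) = (4 * n + 3) + 1 by ring, Nat.factorial_succ,
      show 4 * n + 3 = (4 * n + 2) + 1 by ring, Nat.factorial_succ,
      show 4 * n + 2 = (4 * n + 1) + 1 by ring, Nat.factorial_succ,
      show 4 * n + 1 = (4 * n) + 1 by ring, Nat.factorial_succ]
    try ring_nf
  have hf : ((n + 1).factorial : ℂ) = ((n : ℂ) + 1) * (n.factorial : ℂ) := by
    rw [Nat.factorial_succ]; push_cast; ring
  have h4' : ((4 * (n + 1)).factorial : ℂ)
      = (4 * (n : ℂ) + 4) * ((4 * n + 3) * ((4 * n + 2) * ((4 * n + 1) * ((4 * n).factorial : ℂ)))) := by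
    rw [h4]; push_cast; ring
  have key : ((n : ℂ) + 1) ^ 3 * ((4 * (n + 1)).factorial : ℂ) * ((n.factorial : ℂ)) ^ 4
      = (4 * (4 * (n : ℂ) + 1) * (4 * n + 2) * (4 * n + 3)) * ((4 * n).factorial : ℂ)
        * (((n + 1).factorial : ℂ)) ^ 4 := by
    rw [h4', hf]; ring
  have hP : (((n + 1).factorial : ℂ)) ≠ 0 := fact_ne _
  have hQ : ((n.factorial : ℂ)) ≠ 0 := fact_ne _
  unfold cc
  field_simp
  linear_combination key

/-- harmonic-type sums -/
def hh (d : ℕ) : ℂ := ∑ r ∈ Finset.Icc (d + 1) (4 * d), (1 / (r : ℂ))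

lemma hH (n : ℕ) :
    hh (n + 1) = hh n + 1 / (4 * (n : ℂ) + 1) + 1 / (4 * n + 2) + 1 / (4 * n + 3)
      + 1 / (4 * n + 4) - 1 / ((n : ℂ) + 1) := by
  have e1 : ∑ r ∈ Finset.Icc (n + 1) (4 * (n + 1)), (1 / (r : ℂ))
      = hh n + 1 / ((4 * n + 1 : ℕ) : ℂ) + 1 / ((4 * n + 2 : ℕ) : ℂ)
        + 1 / ((4 * n + 3 : ℕ) : ℂ) + 1 / ((4 * n + 4 : ℕ) : ℂ) := by
    rw [show 4 * (n + 1) = (4 * n + 3) + 1 by ring,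
      Finset.sum_Icc_succ_top (by omega),
      show 4 * n + 3 = (4 * n + 2) + 1 by ring,
      Finset.sum_Icc_succ_top (by omega),
      show 4 * n + 2 = (4 * n + 1) + 1 by ring,
      Finset.sum_Icc_succ_top (by omega),
      show 4 * n + 1 = (4 * n) + 1 by ring,
      Finset.sum_Icc_succ_top (by omega)]
    unfold hh
    push_cast
    ring_nf
  have e2 : ∑ r ∈ Finset.Icc (n + 1) (4 * (n + 1)), (1 / (r : ℂ))
      = 1 / ((n + 1 : ℕ) : ℂ) + hh (n + 1) := by
    unfold hh
    rw [show (n + 1) + 1 = n + 2 from rfl]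
    rw [Finset.Icc_eq_cons_Ioc (by omega : n + 1 ≤ 4 * (n + 1)), Finset.sum_cons]
    congr 1
    rw [← Finset.Icc_add_one_left_eq_Ioc]
    rfl
  have h := e1.symm.trans e2
  push_cast at h ⊢
  linear_combination -h

def Fs : ℂ⟦X⟧ := PowerSeries.mk fun d => ((4 * d).factorial : ℂ) / ((d.factorial : ℂ)) ^ 4
def Gs : ℂ⟦X⟧ := PowerSeries.mk fun d =>
  4 * ((4 * d).factorial : ℂ) / ((d.factorial : ℂ)) ^ 4 *
    ∑ r ∈ Finset.Icc (d + 1) (4 * d), (1 / (r : ℂ))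

lemma coeff_Fs (n : ℕ) : coeff n Fs = cc n := by
  rw [Fs, coeff_mk]; rfl

lemma coeff_Gs (n : ℕ) : coeff n Gs = 4 * cc n * hh n := by
  rw [Gs, coeff_mk]; unfold cc hh; ring

lemma constantCoeff_Fs : constantCoeff (R := ℂ) Fs = 1 := by
  rw [Fs, constantCoeff_mk]; norm_num [Nat.factorial]

lemma constantCoeff_Gs : constantCoeff (R := ℂ) Gs = 0 := by
  rw [Gs, constantCoeff_mk]; simp

lemma c256 : (256 : ℂ⟦X⟧) = C (R := ℂ) 256 := (map_ofNat _ _).symm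
lemma c384 : (384 : ℂ⟦X⟧) = C (R := ℂ) 384 := (map_ofNat _ _).symm
lemma c176 : (176 : ℂ⟦X⟧) = C (R := ℂ) 176 := (map_ofNat _ _).symm
lemma c24 : (24 : ℂ⟦X⟧) = C (R := ℂ) 24 := (map_ofNat _ _).symm
lemma c768 : (768 : ℂ⟦X⟧) = C (R := ℂ) 768 := (map_ofNat _ _).symm
lemma c3 : (3 : ℂ⟦X⟧) = C (R := ℂ) 3 := (map_ofNat _ _).symm

lemma lemF3 : th (th (th Fs)) = PowerSeries.X *
    (256 * th (th (th Fs)) + 384 * th (th Fs) + 176 * th Fs + 24 * Fs) := by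
  ext n
  cases n with
  | zero =>
    simp [coeff_th, coeff_zero_eq_constantCoeff, map_mul]
  | succ m =>
    rw [coeff_succ_X_mul]
    simp only [map_add, c256, c384, c176, c24, coeff_C_mul, coeff_th, coeff_Fs]
    push_cast
    linear_combination hc m


lemma auxG (x k k' h : ℂ) (h1 : 4*x+1 ≠ 0) (h2 : 4*x+2 ≠ 0) (h3 : 4*x+3 ≠ 0)
    (h5 : x+1 ≠ 0)
    (hk : (x+1)^3*k' = 4*(4*x+1)*(4*x+2)*(4*x+3)*k) :
    (x+1)*((x+1)*((x+1)*(4*k'*(h + 1/(4*x+1) + 1/(4*x+2) + 1/(4*x+3) + 1/(4*x+4) - 1/(x+1)))))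
      = 256*(x*(x*(x*(4*k*h)))) + 384*(x*(x*(4*k*h))) + 176*(x*(4*k*h)) + 24*(4*k*h)
        - 3*((x+1)*((x+1)*k')) + 768*(x*(x*k)) + 768*(x*k) + 176*k := by
  have h4 : 4*x+4 ≠ 0 := by
    intro hz; apply h5; linear_combination hz/4
  have ha1 : (4*x+1) * (1/(4*x+1)) = 1 := mul_one_div_cancel h1
  have ha2 : (4*x+2) * (1/(4*x+2)) = 1 := mul_one_div_cancel h2
  have ha3 : (4*x+3) * (1/(4*x+3)) = 1 := mul_one_div_cancel h3
  have ha4 : (4*x+4) * (1/(4*x+4)) = 1 := mul_one_div_cancel h4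
  have ha5 : (x+1) * (1/(x+1)) = 1 := mul_one_div_cancel h5
  linear_combination (4*h + 4*(1/(4*x+1)) + 4*(1/(4*x+2)) + 4*(1/(4*x+3)))*hk
    + 16*(4*x+2)*(4*x+3)*k*ha1 + 16*(4*x+1)*(4*x+3)*k*ha2 + 16*(4*x+1)*(4*x+2)*k*ha3
    + (x+1)^2*k'*ha4 - 4*(x+1)^2*k'*ha5

lemma lemG3 : th (th (th Gs)) = PowerSeries.X *
      (256 * th (th (th Gs)) + 384 * th (th Gs) + 176 * th Gs + 24 * Gs)
    - 3 * th (th Fs) + PowerSeries.X * (768 * th (th Fs) + 768 * th Fs + 176 * Fs) := by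
  ext n
  cases n with
  | zero =>
    simp [th, coeff_zero_eq_constantCoeff, map_mul, map_sub, map_add]
  | succ m =>
    simp only [map_add, map_sub, coeff_succ_X_mul, c256, c384, c176, c24, c768, c3,
      coeff_C_mul, coeff_th, coeff_Fs, coeff_Gs]
    rw [hH m]
    have h1 : (4 * (m : ℂ) + 1) ≠ 0 := by
      have h : ((4 * m + 1 : ℕ) : ℂ) ≠ 0 := Nat.cast_ne_zero.mpr (by omega)
      push_cast at h; exact h
    have h2 : (4 * (m : ℂ) + 2) ≠ 0 := by
      have h : ((4 * m + 2 : ℕ) : ℂ) ≠ 0 := Nat.cast_ne_zero.mpr (by omega)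
      push_cast at h; exact h
    have h3 : (4 * (m : ℂ) + 3) ≠ 0 := by
      have h : ((4 * m + 3 : ℕ) : ℂ) ≠ 0 := Nat.cast_ne_zero.mpr (by omega)
      push_cast at h; exact h
    have h5 : ((m : ℂ) + 1) ≠ 0 := Nat.cast_add_one_ne_zero m
    push_cast
    linear_combination auxG (m : ℂ) (cc m) (cc (m+1)) (hh m) h1 h2 h3 h5 (hc m)

lemma lemE : ((1 - 256*PowerSeries.X)*(2*Fs*(th (th Fs)) - (th Fs)*(th Fs)) - 256*PowerSeries.X*(Fs*(th Fs)) - 48*PowerSeries.X*(Fs*Fs)) = 0 := by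
  apply th_eq_zero
  · have expand : th ((1 - 256*PowerSeries.X)*(2*Fs*(th (th Fs)) - (th Fs)*(th Fs)) - 256*PowerSeries.X*(Fs*(th Fs)) - 48*PowerSeries.X*(Fs*Fs)) = 2*Fs*((th (th (th Fs))) - PowerSeries.X*(256*(th (th (th Fs))) + 384*(th (th Fs)) + 176*(th Fs) + 24*Fs)) := by
      simp only [th_mul, th_add, th_sub, th_one, th_X, th_ofNat]
      ring
    rw [expand]
    linear_combination (2*Fs) * lemF3
  · simp [map_ofNat, constantCoeff_th, constantCoeff_Fs]

lemma lemC1 : ((1 - 256*PowerSeries.X)*(2*Fs*(th (th Gs)) + 2*Gs*(th (th Fs)) - 2*(th Fs)*(th Gs) + 2*Fs*(th Fs)) - 256*PowerSeries.X*(Fs*Fs + Fs*(th Gs) + Gs*(th Fs)) - 96*PowerSeries.X*(Fs*Gs)) = 0 := by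
  apply th_eq_zero
  · have expand : th ((1 - 256*PowerSeries.X)*(2*Fs*(th (th Gs)) + 2*Gs*(th (th Fs)) - 2*(th Fs)*(th Gs) + 2*Fs*(th Fs)) - 256*PowerSeries.X*(Fs*Fs + Fs*(th Gs) + Gs*(th Fs)) - 96*PowerSeries.X*(Fs*Gs)) = -2*((1 - 256*PowerSeries.X)*(2*Fs*(th (th Fs)) - (th Fs)*(th Fs)) - 256*PowerSeries.X*(Fs*(th Fs)) - 48*PowerSeries.X*(Fs*Fs)) + 2*Gs*((th (th (th Fs))) - PowerSeries.X*(256*(th (th (th Fs))) + 384*(th (th Fs)) + 176*(th Fs) + 24*Fs)) + 2*Fs*((th (th (th Gs))) - PowerSeries.X*(256*(th (th (th Gs))) + 384*(th (th Gs)) + 176*(th Gs) + 24*Gs) + 3*(th (th Fs)) - PowerSeries.X*(768*(th (th Fs)) + 768*(th Fs) + 176*Fs)) := by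
      simp only [th_mul, th_add, th_sub, th_one, th_X, th_ofNat]
      ring
    rw [expand]
    linear_combination (-2 : ℂ⟦X⟧)*lemE + (2*Gs)*lemF3 + (2*Fs)*lemG3
  · simp [map_ofNat, constantCoeff_th, constantCoeff_Fs, constantCoeff_Gs]

lemma lemC0 : ((1 - 256*PowerSeries.X)*(2*Gs*(2*(th Fs)+(th (th Gs))) - (Fs+(th Gs))*(Fs+(th Gs))) - 256*PowerSeries.X*(Gs*(Fs+(th Gs))) - 48*PowerSeries.X*(Gs*Gs) + 1) = 0 := by
  apply th_eq_zero
  · have expand : th ((1 - 256*PowerSeries.X)*(2*Gs*(2*(th Fs)+(th (th Gs))) - (Fs+(th Gs))*(Fs+(th Gs))) - 256*PowerSeries.X*(Gs*(Fs+(th Gs))) - 48*PowerSeries.X*(Gs*Gs) + 1) = -((1 - 256*PowerSeries.X)*(2*Fs*(th (th Gs)) + 2*Gs*(th (th Fs)) - 2*(th Fs)*(th Gs) + 2*Fs*(th Fs)) - 256*PowerSeries.X*(Fs*Fs + Fs*(th Gs) + Gs*(th Fs)) - 96*PowerSeries.X*(Fs*Gs)) + 2*Gs*((th (th (th Gs)))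 - PowerSeries.X*(256*(th (th (th Gs))) + 384*(th (th Gs)) + 176*(th Gs) + 24*Gs) + 3*(th (th Fs)) - PowerSeries.X*(768*(th (th Fs)) + 768*(th Fs) + 176*Fs)) := by
      simp only [th_mul, th_add, th_sub, th_one, th_X, th_ofNat]
      ring
    rw [expand]
    linear_combination (-1 : ℂ⟦X⟧)*lemC1 + (2*Gs)*lemG3
  · simp [map_ofNat, constantCoeff_th, constantCoeff_Fs, constantCoeff_Gs]

lemma lemW : ((Fs*Fs + Fs*(th Gs) - Gs*(th Fs))*(Fs*Fs + Fs*(th Gs) - Gs*(th Fs))*(1 - 256*PowerSeries.X) - Fs*Fs) = 0 := by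
  linear_combination (-(Gs*Gs))*lemE + (Fs*Gs)*lemC1 + (-(Fs*Fs))*lemC0

lemma lemTW : (2*(Fs*Fs + Fs*(th Gs) - Gs*(th Fs))*(2*Fs*(th Fs) + Fs*(th (th Gs)) - Gs*(th (th Fs)))*(1 - 256*PowerSeries.X) - 256*PowerSeries.X*((Fs*Fs + Fs*(th Gs) - Gs*(th Fs))*(Fs*Fs + Fs*(th Gs) - Gs*(th Fs))) - 2*Fs*(th Fs)) = 0 := by
  have h1 : th ((Fs*Fs + Fs*(th Gs) - Gs*(th Fs))*(Fs*Fs + Fs*(th Gs) - Gs*(th Fs))*(1 - 256*PowerSeries.X) - Fs*Fs) = 0 := by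
    rw [lemW]
    simp [th]
  have h2 : th ((Fs*Fs + Fs*(th Gs) - Gs*(th Fs))*(Fs*Fs + Fs*(th Gs) - Gs*(th Fs))*(1 - 256*PowerSeries.X) - Fs*Fs) = (2*(Fs*Fs + Fs*(th Gs) - Gs*(th Fs))*(2*Fs*(th Fs) + Fs*(th (th Gs)) - Gs*(th (th Fs)))*(1 - 256*PowerSeries.X) - 256*PowerSeries.X*((Fs*Fs + Fs*(th Gs) - Gs*(th Fs))*(Fs*Fs + Fs*(th Gs) - Gs*(th Fs))) - 2*Fs*(th Fs)) := by
    simp only [th_mul, th_add, th_sub, th_one, th_X, th_ofNat]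
    ring
  rw [← h2, h1]

lemma Nn_ne : (Fs*Fs + Fs*(th Gs) - Gs*(th Fs)) ≠ 0 := by
  intro h
  have h0 : constantCoeff (R := ℂ) (Fs*Fs + Fs*(th Gs) - Gs*(th Fs)) = 1 := by
    simp [constantCoeff_th, constantCoeff_Fs, constantCoeff_Gs]
  rw [h, map_zero] at h0
  exact zero_ne_one h0

lemma lemR1 : ((1 - 256*PowerSeries.X)*Fs*(2*Fs*(th Fs) + Fs*(th (th Gs)) - Gs*(th (th Fs))) - (1 - 256*PowerSeries.X)*(Fs*Fs + Fs*(th Gs) - Gs*(th Fs))*(th Fs) - 128*PowerSeries.X*((Fs*Fs + Fs*(th Gs) - Gs*(th Fs))*Fs)) = 0 := by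
  have h2 : (Fs*Fs + Fs*(th Gs) - Gs*(th Fs)) * (2 * ((1 - 256*PowerSeries.X)*Fs*(2*Fs*(th Fs) + Fs*(th (th Gs)) - Gs*(th (th Fs))) - (1 - 256*PowerSeries.X)*(Fs*Fs + Fs*(th Gs) - Gs*(th Fs))*(th Fs) - 128*PowerSeries.X*((Fs*Fs + Fs*(th Gs) - Gs*(th Fs))*Fs))) = (Fs*Fs + Fs*(th Gs) - Gs*(th Fs)) * 0 := by
    rw [mul_zero]
    linear_combination Fs*lemTW - 2*(th Fs)*lemW
  have h3 := mul_left_cancel₀ Nn_ne h2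
  have h4 : (2 : ℂ⟦X⟧) ≠ 0 := by
    intro hh
    have := congrArg (constantCoeff (R := ℂ)) hh
    rw [map_ofNat] at this; norm_num at this
  rcases mul_eq_zero.mp h3 with h | h
  · exact absurd h h4
  · exact h


end Stmt13Aux
end

open Stmt13Aux in
/-- over `ℂ⟦q⟧`, with
`I₁ᴷ³ = (4 ∑_{d≥1} (4d)!/(d!)⁴ (∑_{r=d+1}^{4d} 1/r) qᵈ) / (∑_{d≥0} (4d)!/(d!)⁴ qᵈ)`,
`A₁' = q·d(I₁ᴷ³)/dq`, `X = (q·d(A₁')/dq)/(1+A₁')`, and `L = (1-256q)^{-1/4}`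
(characterized by `L⁴(1-256q) = 1` with constant term `1`), one has
`X² - 2 q·dX/dq + (1/16)(12L⁸ - 11L⁴ - 1) = 0`. -/
theorem stmt13
    (I₁ : ℂ⟦X⟧)
    (hI₁ : I₁ =
      (PowerSeries.mk fun d =>
        4 * ((4 * d).factorial : ℂ) / ((d.factorial : ℂ)) ^ 4 *
          ∑ r ∈ Finset.Icc (d + 1) (4 * d), (1 / (r : ℂ))) *
      (PowerSeries.mk fun d =>
        ((4 * d).factorial : ℂ) / ((d.factorial : ℂ)) ^ 4)⁻¹)
    (A₁' Xs L : ℂ⟦X⟧)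
    (hA : A₁' = PowerSeries.X * d⁄dX ℂ I₁)
    (hX : Xs = (PowerSeries.X * d⁄dX ℂ A₁') * (1 + A₁')⁻¹)
    (hL : L ^ 4 * (1 - 256 * PowerSeries.X) = 1)
    (hL0 : PowerSeries.constantCoeff (R := ℂ) L = 1) :
    Xs ^ 2 - 2 * (PowerSeries.X * d⁄dX ℂ Xs)
      + (PowerSeries.C (R := ℂ) (1/16)) * (12 * L ^ 8 - 11 * L ^ 4 - 1) = 0 := by
  have hI₁' : I₁ = Gs * Fs⁻¹ := hI₁
  have hA' : A₁' = th I₁ := hA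
  have hFinv : Fs⁻¹ * Fs = 1 :=
    PowerSeries.inv_mul_cancel Fs (by rw [constantCoeff_Fs]; exact one_ne_zero)
  have hinvd : th (Fs⁻¹) = -(Fs⁻¹*Fs⁻¹) * th Fs := by
    unfold th
    rw [PowerSeries.derivative_inv']
    ring
  have hA2 : A₁' = th Gs * Fs⁻¹ + Gs * th (Fs⁻¹) := by
    rw [hA', hI₁', th_mul]
  have hAF : A₁' * (Fs * Fs) = Fs * th Gs - Gs * th Fs := by
    rw [hA2, hinvd]
    linear_combination (th Gs * Fs - Gs * th Fs * (Fs⁻¹ * Fs + 1)) * hFinv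
  have hwc : constantCoeff (R := ℂ) (1 + A₁') = 1 := by
    rw [map_add, map_one, hA', constantCoeff_th, add_zero]
  have hwinv : (1 + A₁')⁻¹ * (1 + A₁') = 1 :=
    PowerSeries.inv_mul_cancel _ (by rw [hwc]; exact one_ne_zero)
  have hXw : Xs * (1 + A₁') = th A₁' := by
    rw [hX]
    show th A₁' * (1 + A₁')⁻¹ * (1 + A₁') = th A₁'
    rw [mul_assoc, hwinv, mul_one]
  have hwF : (1 + A₁') * (Fs * Fs) = (Fs*Fs + Fs*(th Gs) - Gs*(th Fs)) := by
    linear_combination hAF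
  have hNT : th (Fs*Fs + Fs*(th Gs) - Gs*(th Fs)) = (2*Fs*(th Fs) + Fs*(th (th Gs)) - Gs*(th (th Fs))) := by
    simp only [th_mul, th_add, th_sub, th_one, th_X, th_ofNat]
    ring
  have h5 : th A₁' * (Fs * Fs) + (1 + A₁') * (th Fs * Fs + Fs * th Fs) = (2*Fs*(th Fs) + Fs*(th (th Gs)) - Gs*(th (th Fs))) := by
    have h5a := congrArg th hwF
    rw [th_mul, th_mul, th_add, th_one, hNT] at h5a
    linear_combination h5a
  have hXsN : Xs * (Fs*Fs + Fs*(th Gs) - Gs*(th Fs)) * Fs + 2 * (Fs*Fs + Fs*(th Gs) - Gs*(th Fs)) * th Fs = (2*Fs*(th Fs) + Fs*(th (th Gs)) - Gs*(th (th Fs))) * Fs := by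
    linear_combination Fs*h5 + (Fs*Fs*Fs)*hXw + (-(Xs*Fs + 2*th Fs))*hwF
  have hN0 : (Fs*Fs + Fs*(th Gs) - Gs*(th Fs)) * (Xs * ((1 - 256*PowerSeries.X) * Fs) - (128*PowerSeries.X*Fs - (1 - 256*PowerSeries.X)*(th Fs))) = 0 := by
    linear_combination (1 - 256*PowerSeries.X)*hXsN + lemR1
  have hXs1 : Xs * ((1 - 256*PowerSeries.X) * Fs) = 128*PowerSeries.X*Fs - (1 - 256*PowerSeries.X)*(th Fs) := by
    rcases mul_eq_zero.mp hN0 with h | h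
    · exact absurd h Nn_ne
    · linear_combination h
  have h6l : th (Xs * ((1 - 256*PowerSeries.X) * Fs)) = th Xs * ((1 - 256*PowerSeries.X) * Fs) + Xs * (-(256*PowerSeries.X)*Fs + (1 - 256*PowerSeries.X)*(th Fs)) := by
    simp only [th_mul, th_add, th_sub, th_one, th_X, th_ofNat]
    ring
  have h6r : th (128*PowerSeries.X*Fs - (1 - 256*PowerSeries.X)*(th Fs)) =
      128*PowerSeries.X*Fs + 128*PowerSeries.X*(th Fs) + 256*PowerSeries.X*(th Fs) - (1 - 256*PowerSeries.X)*(th (th Fs)) := by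
    simp only [th_mul, th_add, th_sub, th_one, th_X, th_ofNat]
    ring
  have hTs : th Xs * ((1 - 256*PowerSeries.X) * Fs) + Xs * (-(256*PowerSeries.X)*Fs + (1 - 256*PowerSeries.X)*(th Fs)) =
      128*PowerSeries.X*Fs + 128*PowerSeries.X*(th Fs) + 256*PowerSeries.X*(th Fs) - (1 - 256*PowerSeries.X)*(th (th Fs)) := by
    rw [← h6l, ← h6r]
    exact congrArg th hXs1
  have hL8 : L^8 * ((1 - 256*PowerSeries.X)*(1 - 256*PowerSeries.X)) = 1 := by
    linear_combination (L^4*(1 - 256*PowerSeries.X) + 1)*hL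
  have key16 : (16*Xs^2 - 32*(th Xs) + (12*L^8 - 11*L^4 - 1)) * ((1 - 256*PowerSeries.X)*(1 - 256*PowerSeries.X)*Fs*Fs) = 0 := by
    linear_combination 16*(1 - 256*PowerSeries.X)*lemE
      + (16*(Xs*(1 - 256*PowerSeries.X)*Fs + 128*PowerSeries.X*Fs - (1 - 256*PowerSeries.X)*(th Fs) - 512*PowerSeries.X*Fs + 2*(1 - 256*PowerSeries.X)*(th Fs)))*hXs1
      - 32*(1 - 256*PowerSeries.X)*Fs*hTs - 11*(1 - 256*PowerSeries.X)*Fs*Fs*hL + 12*Fs*Fs*hL8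
  have h16 : (PowerSeries.C (R := ℂ) (1/16)) * 16 = 1 := by
    rw [show (16:ℂ⟦X⟧) = C (R := ℂ) 16 from (map_ofNat _ _).symm, ← map_mul]
    norm_num
  have hu : (Xs^2 - 2*(th Xs) + (PowerSeries.C (R := ℂ) (1/16)) * (12*L^8 - 11*L^4 - 1))
      * (16*((1 - 256*PowerSeries.X)*(1 - 256*PowerSeries.X)*Fs*Fs)) = 0 := by
    linear_combination key16 + ((12*L^8 - 11*L^4 - 1)*((1 - 256*PowerSeries.X)*(1 - 256*PowerSeries.X)*Fs*Fs))*h16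
  rcases mul_eq_zero.mp hu with h | h
  · exact h
  · exfalso
    have hcu := congrArg (constantCoeff (R := ℂ)) h
    simp [map_ofNat, constantCoeff_Fs, constantCoeff_X] at hcu
end
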